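/- Let F be a field of characteristic zero, and let c ∈ F with c ≠ 1 and c ≠ −1. If X, Y, Z, V, U ∈ F[t] satisfy X² − (c²−1)·Y² = 1, Y − (c−1)·Z = V, and V·U = 1 (i.e. system (2) with T the constant polynomial c), then Y and Z are constant polynomials. -/

import Mathlib

open Polynomial

/-- For a solution of system (2) in `F[t]` (`F` of characteristic zero) with `T` a constant
`c ≠ ±1`, the polynomials `Y` and `Z` are constants. -/
theorem solution_const_T {F : Type*} [Field F] [CharZero F]
    (c : F) (hc1 : c ≠ 1) (hc2 : c ≠ -1)
    (X Y Z V U : Polynomial F)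
    (h1 : X ^ 2 - ((C c) ^ 2 - 1) * Y ^ 2 = 1)
    (h2 : Y - (C c - 1) * Z = V)
    (h3 : V * U = 1) :
    (∃ a, Y = C a) ∧ (∃ b, Z = C b) := by
  set d : F := c ^ 2 - 1 with hd
  have hdne : d ≠ 0 := by
    intro h
    rw [hd] at h
    have : (c - 1) * (c + 1) = 0 := by linear_combination h
    rcases mul_eq_zero.1 this with h' | h'
    · exact hc1 (sub_eq_zero.1 h')
    · exact hc2 (eq_neg_of_add_eq_zero_left h')
  have hCd : (C c) ^ 2 - 1 = C d := by
    simp only [hd, C_sub, C_pow, C_1]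
  rw [hCd] at h1
  -- Step 1: Y is constant.
  have hYder : derivative Y = 0 := by
    by_contra hY'
    have hYdeg : Y.natDegree ≠ 0 := by
      intro h0
      obtain ⟨a, ha⟩ := natDegree_eq_zero.1 h0
      rw [← ha] at hY'
      simp at hY'
    -- X ≠ 0
    have hX0 : X ≠ 0 := by
      intro hX
      rw [hX] at h1
      have hY : Y * (-(C d) * Y) = 1 := by linear_combination h1
      have : IsUnit Y := isUnit_iff_exists_inv.2 ⟨_, hY⟩
      obtain ⟨a, -, ha⟩ := Polynomial.isUnit_iff.1 this
      rw [← ha] at hY'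
      simp at hY'
    have hcop : IsCoprime X Y := ⟨X, -(C d) * Y, by linear_combination h1⟩
    -- differentiate h1
    have hder : X * derivative X = C d * Y * derivative Y := by
      have := congrArg derivative h1
      simp only [derivative_sub, derivative_mul, derivative_pow, derivative_one,
        derivative_C, zero_mul, mul_zero, zero_add, sub_eq_zero, map_ofNat] at this
      norm_num [map_ofNat] at this
      have h2' : 2 * (X * derivative X) = 2 * (C d * Y * derivative Y) := by
        linear_combination this
      have h2ne : (2 : Polynomial F) ≠ 0 := by
        intro h; have := congrArg (eval 0) h; norm_num [map_ofNat] at this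
      exact mul_left_cancel₀ h2ne h2'
    have hdvd : X ∣ derivative Y := by
      have h1' : X ∣ (C d * derivative Y) * Y := ⟨derivative X, by linear_combination -hder⟩
      have h2' : X ∣ C d * derivative Y := hcop.dvd_of_dvd_mul_right h1'
      have : X ∣ C d⁻¹ * (C d * derivative Y) := Dvd.dvd.mul_left h2' _
      rwa [← mul_assoc, ← C_mul, inv_mul_cancel₀ hdne, C_1, one_mul] at this
    -- degrees
    have hdegXY : X.natDegree = Y.natDegree := by
      have hXX : X ^ 2 = 1 + C d * Y ^ 2 := by linear_combination h1
      have hdeg2 : (C d * Y ^ 2).natDegree = 2 * Y.natDegree := by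
        rw [natDegree_C_mul (by exact_mod_cast hdne), natDegree_pow]
      have : (X ^ 2).natDegree = 2 * Y.natDegree := by
        rw [hXX, natDegree_add_eq_right_of_natDegree_lt, hdeg2]
        rw [hdeg2, natDegree_one]
        omega
      rw [natDegree_pow] at this
      omega
    have hle : X.natDegree ≤ (derivative Y).natDegree := natDegree_le_of_dvd hdvd hY'
    have hlt : (derivative Y).natDegree < Y.natDegree := natDegree_derivative_lt hYdeg
    omega
  obtain ⟨a, ha⟩ : ∃ a, Y = C a := ⟨Y.coeff 0, eq_C_of_derivative_eq_zero hYder⟩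
  refine ⟨⟨a, ha⟩, ?_⟩
  -- Step 2: Z is constant.
  obtain ⟨v, -, hv⟩ := Polynomial.isUnit_iff.1 (isUnit_iff_exists_inv.2 ⟨_, h3⟩)
  have hc1' : c - 1 ≠ 0 := sub_ne_zero.2 hc1
  refine ⟨(a - v) / (c - 1), ?_⟩
  have hZ : C (c - 1) * Z = C (a - v) := by
    rw [C_sub, C_sub, C_1]
    linear_combination ha - h2 + hv
  have : C (c - 1) * Z = C (c - 1) * C ((a - v) / (c - 1)) := by
    rw [hZ, ← C_mul, mul_div_cancel₀ _ hc1']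
  exact mul_left_cancel₀ (C_ne_zero.mpr hc1') this
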